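/- Strong convexity of E* under modal bounds on differences of utility shocks: suppose that for every pair i ≠ j the pushforward of μ under the map x ↦ x⁽ʲ⁾ − x⁽ⁱ⁾ is absolutely continuous with respect to Lebesgue measure on ℝ with a density g_{i,j} that attains its maximum at a mode z̄_{i,j} ∈ ℝ (so g_{i,j}(z) ≤ g_{i,j}(z̄_{i,j}) for all z ∈ ℝ). Then the convex conjugate E* is β-strongly convex on Δ with respect to the ℓ1-norm with convexity parameter β = 1 / (2 ∑_{i=1}^{n} ∑_{j≠i} g_{i,j}(z̄_{i,j})). -/

import Mathlib

open MeasureTheory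

lemma step_mono (V : ℝ) : Monotone (fun r : ℝ => if V < r then (1:ℝ) else -1) := by
  intro a b hab
  by_cases h : V < a
  · simp [h, lt_of_lt_of_le h hab]
  · by_cases h' : V < b <;> simp [h, h'] <;> norm_num

lemma step_int (V : ℝ) {t t' : ℝ} (h : t ≤ t') :
    ∫ r in t..t', (if V < r then (1:ℝ) else -1) = |t' - V| - |t - V| := by
  set c : ℝ := max t (min V t') with hc
  have hc1 : t ≤ c := le_max_left _ _
  have hc2 : c ≤ t' := max_le h (min_le_right _ _)
  have hi1 : IntervalIntegrable (fun r : ℝ => if V < r then (1:ℝ) else -1) volume t c :=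
    (step_mono V).intervalIntegrable
  have hi2 : IntervalIntegrable (fun r : ℝ => if V < r then (1:ℝ) else -1) volume c t' :=
    (step_mono V).intervalIntegrable
  have hsplit := intervalIntegral.integral_add_adjacent_intervals hi1 hi2
  have e1 : ∫ r in t..c, (if V < r then (1:ℝ) else -1) = -(c - t) := by
    rw [intervalIntegral.integral_of_le hc1]
    have heq : ∀ r ∈ Set.Ioc t c, (if V < r then (1:ℝ) else -1) = -1 := by
      intro r hr
      have hrt : t < r := hr.1
      have hrm : r ≤ min V t' := by
        rcases le_max_iff.mp hr.2 with h1 | h1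
        · exact absurd h1 (not_le.mpr hrt)
        · exact h1
      have hnot : ¬ (V < r) := not_lt.mpr ((le_min_iff.mp hrm).1)
      simp [hnot]
    rw [setIntegral_congr_fun measurableSet_Ioc heq]
    simp [Real.volume_Ioc, ENNReal.toReal_ofReal (sub_nonneg.mpr hc1)]
    rw [max_eq_left (sub_nonneg.mpr hc1)]; ring
  have e2 : ∫ r in c..t', (if V < r then (1:ℝ) else -1) = t' - c := by
    rw [intervalIntegral.integral_of_le hc2]
    have heq : ∀ r ∈ Set.Ioc c t', (if V < r then (1:ℝ) else -1) = 1 := by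
      intro r hr
      have hcr : c < r := hr.1
      have hVr : V < r := by
        rcases le_total V t' with hV | hV
        · exact lt_of_le_of_lt (le_max_of_le_right (le_min le_rfl hV)) hcr
        · exfalso
          have ht'c : t' ≤ c := le_max_of_le_right (le_min hV le_rfl)
          exact absurd hr.2 (not_le.mpr (lt_of_le_of_lt ht'c hcr))
      simp [hVr]
    rw [setIntegral_congr_fun measurableSet_Ioc heq]
    simp [Real.volume_Ioc, ENNReal.toReal_ofReal (sub_nonneg.mpr hc2)]
    exact hc2
  rw [← hsplit, e1, e2]
  rcases le_total V t with h1 | h1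
  · have hcv : c = t := by rw [hc, min_eq_left (h1.trans h), max_eq_left h1]
    rw [hcv, abs_of_nonneg (by linarith), abs_of_nonneg (by linarith)]; ring
  · rcases le_total t' V with h2 | h2
    · have hcv : c = t' := by rw [hc, min_eq_right h2, max_eq_right h]
      rw [hcv, abs_of_nonpos (by linarith), abs_of_nonpos (by linarith)]; ring
    · have hcv : c = V := by rw [hc, min_eq_left h2, max_eq_right h1]
      rw [hcv, abs_of_nonneg (by linarith), abs_of_nonpos (by linarith)]; ring

lemma lin_int (c d a b : ℝ) : ∫ r in a..b, (c + d*r) = c*(b-a) + d*(b^2-a^2)/2 := by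
  have h1 : IntervalIntegrable (fun r : ℝ => d*r) volume a b :=
    Continuous.intervalIntegrable (by fun_prop) _ _
  rw [intervalIntegral.integral_add intervalIntegrable_const h1,
    intervalIntegral.integral_const, intervalIntegral.integral_const_mul]
  simp
  ring

section OneD
variable {Ω : Type*} [MeasurableSpace Ω] (μ : Measure Ω) [IsProbabilityMeasure μ]
  (V : Ω → ℝ)

lemma step_integrable (hVm : Measurable V) (r : ℝ) :
    Integrable (fun x => if V x < r then (1:ℝ) else -1) μ := by
  have hm : Measurable (fun x => if V x < r then (1:ℝ) else -1) :=
    Measurable.ite (hVm measurableSet_Iio) measurable_const measurable_const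
  refine (integrable_const (1:ℝ)).mono' hm.aestronglyMeasurable ?_
  filter_upwards with x
  by_cases h : V x < r <;> simp [h]

lemma abs_integrable (hVi : Integrable V μ) (t : ℝ) : Integrable (fun x => |t - V x|) μ :=
  ((integrable_const t).sub hVi).abs

/-- difference of φ as an interval integral of `m` -/
lemma phi_diff (hVm : Measurable V) (hVi : Integrable V μ) {t t' : ℝ} (h : t ≤ t') :
    (∫ x, |t' - V x| ∂μ) - (∫ x, |t - V x| ∂μ)
      = ∫ r in Set.Ioc t t', (∫ x, (if V x < r then (1:ℝ) else -1) ∂μ) := by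
  have key : ∀ x, |t' - V x| - |t - V x|
      = ∫ r in Set.Ioc t t', (if V x < r then (1:ℝ) else -1) := by
    intro x
    rw [← intervalIntegral.integral_of_le h]
    exact (step_int (V x) h).symm
  rw [← integral_sub (abs_integrable μ V hVi t') (abs_integrable μ V hVi t)]
  have : (∫ x, (|t' - V x| - |t - V x|) ∂μ)
      = ∫ x, ∫ r in Set.Ioc t t', (if V x < r then (1:ℝ) else -1) ∂(volume) ∂μ := by
    congr 1; funext x; exact key x
  rw [this]
  have hint : Integrable (Function.uncurry fun (x : Ω) (r : ℝ) =>
      (if V x < r then (1:ℝ) else -1)) (μ.prod (volume.restrict (Set.Ioc t t'))) := by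
    have hm : Measurable (Function.uncurry fun (x : Ω) (r : ℝ) =>
        (if V x < r then (1:ℝ) else -1)) := by
      have : MeasurableSet {p : Ω × ℝ | V p.1 < p.2} :=
        measurableSet_lt (hVm.comp measurable_fst) measurable_snd
      exact Measurable.ite this measurable_const measurable_const
    refine (integrable_const (1:ℝ)).mono' hm.aestronglyMeasurable ?_
    filter_upwards with p
    by_cases h : V p.1 < p.2 <;> simp [Function.uncurry, h]
  exact integral_integral_swap hint

lemma m_lip (hVm : Measurable V) (S : ℝ) (hS : 0 ≤ S)
    (hdens : ∀ r r' : ℝ, r ≤ r' → μ {x | V x ∈ Set.Ico r r'} ≤ ENNReal.ofReal (S * (r' - r)))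
    {r r' : ℝ} (h : r ≤ r') :
    (∫ x, (if V x < r' then (1:ℝ) else -1) ∂μ) - (∫ x, (if V x < r then (1:ℝ) else -1) ∂μ)
      ≤ 2 * S * (r' - r) := by
  rw [← integral_sub (step_integrable μ V hVm r') (step_integrable μ V hVm r)]
  have key : ∀ x, (if V x < r' then (1:ℝ) else -1) - (if V x < r then (1:ℝ) else -1)
      = Set.indicator {x | V x ∈ Set.Ico r r'} (fun _ => (2:ℝ)) x := by
    intro x
    by_cases h1 : V x < r
    · have h2 : V x < r' := lt_of_lt_of_le h1 h
      have : V x ∉ Set.Ico r r' := fun hm => absurd hm.1 (not_le.mpr h1)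
      simp [h1, h2, Set.indicator_of_notMem, this]
    · by_cases h2 : V x < r'
      · have : V x ∈ Set.Ico r r' := ⟨not_lt.mp h1, h2⟩
        simp only [h1, h2, if_true, if_false]
        rw [Set.indicator_of_mem (show x ∈ {x | V x ∈ Set.Ico r r'} from this)]
        norm_num
      · have : V x ∉ Set.Ico r r' := fun hm => absurd hm.2 h2
        simp [h1, h2, Set.indicator_of_notMem, this]
  have : (∫ x, ((if V x < r' then (1:ℝ) else -1) - (if V x < r then (1:ℝ) else -1)) ∂μ)
      = ∫ x, Set.indicator {x | V x ∈ Set.Ico r r'} (fun _ => (2:ℝ)) x ∂μ := by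
    congr 1; funext x; exact key x
  rw [this, integral_indicator_const (2:ℝ) (show MeasurableSet {x | V x ∈ Set.Ico r r'} from hVm measurableSet_Ico)]
  have hb := hdens r r' h
  have h0 : 0 ≤ S * (r' - r) := mul_nonneg hS (by linarith)
  have htr : (μ {x | V x ∈ Set.Ico r r'}).toReal ≤ S * (r' - r) :=
    ENNReal.toReal_le_of_le_ofReal h0 hb
  rw [smul_eq_mul]
  have htr' : μ.real {x | V x ∈ Set.Ico r r'} ≤ S * (r' - r) := htr
  linarith

set_option maxHeartbeats 1000000 in
lemma oneD_gap (hVm : Measurable V) (hVi : Integrable V μ) (S τ α : ℝ) (hS : 0 ≤ S)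
    (hτ : 0 ≤ τ) (hα0 : 0 ≤ α) (hα1 : α ≤ 1)
    (hdens : ∀ r r' : ℝ, r ≤ r' → μ {x | V x ∈ Set.Ico r r'} ≤ ENNReal.ofReal (S * (r' - r))) :
    α * (∫ x, |(1-α)*τ - V x| ∂μ) + (1-α) * (∫ x, |(-(α*τ)) - V x| ∂μ)
      - ∫ x, |(0:ℝ) - V x| ∂μ ≤ S * (α * (1-α) * τ^2) := by
  set m : ℝ → ℝ := fun r => ∫ x, (if V x < r then (1:ℝ) else -1) ∂μ with hm
  set b : ℝ := (1-α)*τ with hbdef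
  set a : ℝ := -(α*τ) with hadef
  have ha : a ≤ 0 := by rw [hadef]; nlinarith
  have hb : 0 ≤ b := by rw [hbdef]; nlinarith
  have hmono : Monotone m := by
    intro r r' hrr
    exact integral_mono (step_integrable μ V hVm r) (step_integrable μ V hVm r')
      (fun x => step_mono (V x) hrr)
  have hlip : ∀ r r' : ℝ, r ≤ r' → m r' - m r ≤ 2 * S * (r' - r) :=
    fun r r' h => m_lip μ V hVm S hS hdens h
  -- b side
  have hb1 : (∫ x, |b - V x| ∂μ) - (∫ x, |(0:ℝ) - V x| ∂μ) = ∫ r in Set.Ioc 0 b, m r :=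
    phi_diff μ V hVm hVi hb
  have hb2 : ∫ r in Set.Ioc 0 b, m r ≤ m 0 * b + S * b^2 := by
    have hmi : IntegrableOn m (Set.Ioc 0 b) volume :=
      (hmono.intervalIntegrable (a := 0) (b := b)).1
    have hci : IntegrableOn (fun r => m 0 + 2*S*r) (Set.Ioc 0 b) volume := by
      exact Continuous.integrableOn_Ioc (continuous_const.add (continuous_const.mul continuous_id))
    have hmon : ∀ r ∈ Set.Ioc (0:ℝ) b, m r ≤ m 0 + 2*S*r := by
      intro r hr
      have := hlip 0 r hr.1.le
      linarith
    have := setIntegral_mono_on hmi hci measurableSet_Ioc hmon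
    refine this.trans ?_
    have : ∫ r in Set.Ioc 0 b, (m 0 + 2*S*r) = m 0 * b + S * b^2 := by
      rw [← intervalIntegral.integral_of_le hb, lin_int]
      ring
    linarith [this.le, this.ge]
  -- a side
  have ha1 : (∫ x, |(0:ℝ) - V x| ∂μ) - (∫ x, |a - V x| ∂μ) = ∫ r in Set.Ioc a 0, m r :=
    phi_diff μ V hVm hVi ha
  have ha2 : m 0 * (-a) + S * (-(a^2)) ≤ ∫ r in Set.Ioc a 0, m r := by
    have hmi : IntegrableOn m (Set.Ioc a 0) volume :=
      (hmono.intervalIntegrable (a := a) (b := 0)).1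
    have hci : IntegrableOn (fun r => m 0 + 2*S*r) (Set.Ioc a 0) volume := by
      exact Continuous.integrableOn_Ioc (continuous_const.add (continuous_const.mul continuous_id))
    have hmon : ∀ r ∈ Set.Ioc a (0:ℝ), m 0 + 2*S*r ≤ m r := by
      intro r hr
      have := hlip r 0 hr.2
      linarith
    have hle := setIntegral_mono_on hci hmi measurableSet_Ioc hmon
    refine le_trans ?_ hle
    have : ∫ r in Set.Ioc a 0, (m 0 + 2*S*r) = m 0 * (-a) + S * (-(a^2)) := by
      rw [← intervalIntegral.integral_of_le ha, lin_int]
      ring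
    linarith [this.le, this.ge]
  have key : α * ((∫ x, |b - V x| ∂μ) - (∫ x, |(0:ℝ) - V x| ∂μ))
      + (1-α) * ((∫ x, |a - V x| ∂μ) - (∫ x, |(0:ℝ) - V x| ∂μ))
      ≤ α * (m 0 * b + S * b^2) + (1-α) * (m 0 * a + S * a^2) := by
    have e1 : (∫ x, |b - V x| ∂μ) - (∫ x, |(0:ℝ) - V x| ∂μ) ≤ m 0 * b + S * b^2 :=
      hb1.le.trans hb2
    have e2 : (∫ x, |a - V x| ∂μ) - (∫ x, |(0:ℝ) - V x| ∂μ) ≤ m 0 * a + S * a^2 := by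
      have : ∫ r in Set.Ioc a 0, m r ≤ (∫ x, |(0:ℝ) - V x| ∂μ) - (∫ x, |a - V x| ∂μ) := ha1.ge
      nlinarith [ha2]
    nlinarith [e1, e2, hα0, hα1]
  have hfin : α * (m 0 * b + S * b^2) + (1-α) * (m 0 * a + S * a^2)
      = S * (α * (1-α) * τ^2) := by
    rw [hbdef, hadef]; ring
  nlinarith [key, hfin.le, hfin.ge]

end OneD



lemma max_helper (A B t : ℝ) : (A + t) ⊔ (B + (-t)) = (A + B)/2 + |t - (B - A)/2| := by
  rcases le_total (t - (B-A)/2) 0 with h | h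
  · rw [abs_of_nonpos h, max_eq_right (by linarith)]; ring
  · rw [abs_of_nonneg h, max_eq_left (by linarith)]; ring

lemma comb_bound {n : ℕ} (M : Fin n → Fin n → ℝ) (hM : ∀ i j, i ≠ j → 0 ≤ M i j)
    (P N : Finset (Fin n)) (hd : Disjoint P N) :
    ∑ i ∈ P, ∑ j ∈ N, (M i j + M j i) ≤ ∑ i, ∑ j ∈ Finset.univ.erase i, M i j := by
  have hne : ∀ i ∈ P, ∀ j ∈ N, i ≠ j := by
    intro i hi j hj h
    exact Finset.disjoint_left.mp hd (h ▸ hi) hj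
  have h1 : ∑ i ∈ P, ∑ j ∈ N, M i j ≤ ∑ i ∈ P, ∑ j ∈ Finset.univ.erase i, M i j := by
    refine Finset.sum_le_sum fun i hi => ?_
    refine Finset.sum_le_sum_of_subset_of_nonneg ?_ ?_
    · intro j hj
      exact Finset.mem_erase.mpr ⟨fun h => hne i hi j hj h.symm, Finset.mem_univ j⟩
    · intro j hj _
      exact hM i j (fun h => (Finset.mem_erase.mp hj).1 h.symm)
  have h2 : ∑ i ∈ P, ∑ j ∈ N, M j i ≤ ∑ j ∈ N, ∑ i ∈ Finset.univ.erase j, M j i := by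
    rw [Finset.sum_comm]
    refine Finset.sum_le_sum fun j hj => ?_
    refine Finset.sum_le_sum_of_subset_of_nonneg ?_ ?_
    · intro i hi
      exact Finset.mem_erase.mpr ⟨fun h => hne i hi j hj h, Finset.mem_univ i⟩
    · intro i hi _
      exact hM j i (fun h => (Finset.mem_erase.mp hi).1 h.symm)
  have hrow : ∀ i : Fin n, 0 ≤ ∑ j ∈ Finset.univ.erase i, M i j := by
    intro i
    refine Finset.sum_nonneg fun j hj => hM i j (fun h => (Finset.mem_erase.mp hj).1 h.symm)
  have h3 : (∑ i ∈ P, ∑ j ∈ Finset.univ.erase i, M i j)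
      + ∑ j ∈ N, ∑ i ∈ Finset.univ.erase j, M j i ≤ ∑ i, ∑ j ∈ Finset.univ.erase i, M i j := by
    rw [← Finset.sum_union hd]
    exact Finset.sum_le_sum_of_subset_of_nonneg (Finset.subset_univ _) fun i _ _ => hrow i
  calc ∑ i ∈ P, ∑ j ∈ N, (M i j + M j i)
      = (∑ i ∈ P, ∑ j ∈ N, M i j) + ∑ i ∈ P, ∑ j ∈ N, M j i := by
        rw [← Finset.sum_add_distrib]
        exact Finset.sum_congr rfl fun i _ => by rw [← Finset.sum_add_distrib]
    _ ≤ _ := by linarith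

section Pairs
variable {n : ℕ} (μ : Measure (Fin n → ℝ)) [IsProbabilityMeasure μ]
  (g : Fin n → Fin n → ℝ → ℝ) (zbar : Fin n → Fin n → ℝ)

lemma pair_bound
    (hg : ∀ i j, i ≠ j →
      μ.map (fun x : Fin n → ℝ => x j - x i)
        = (volume : Measure ℝ).withDensity (fun z => ENNReal.ofReal (g i j z)))
    (hmode : ∀ i j, i ≠ j → ∀ z, g i j z ≤ g i j (zbar i j))
    (i j : Fin n) (hij : i ≠ j) (s : Set ℝ) (hs : MeasurableSet s) :
    μ {x | x j - x i ∈ s} ≤ ENNReal.ofReal (g i j (zbar i j)) * volume s := by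
  have hm : Measurable fun x : Fin n → ℝ => x j - x i :=
    (measurable_pi_apply j).sub (measurable_pi_apply i)
  have : μ {x | x j - x i ∈ s} = μ.map (fun x : Fin n → ℝ => x j - x i) s := by
    rw [Measure.map_apply hm hs]; rfl
  rw [this, hg i j hij, withDensity_apply _ hs]
  calc ∫⁻ z in s, ENNReal.ofReal (g i j z) ∂volume
      ≤ ∫⁻ _ in s, ENNReal.ofReal (g i j (zbar i j)) ∂volume :=
        lintegral_mono fun z => ENNReal.ofReal_le_ofReal (hmode i j hij z)
    _ = ENNReal.ofReal (g i j (zbar i j)) * volume s := by rw [setLIntegral_const]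

lemma pair_Ico_bound
    (hg0 : ∀ i j, i ≠ j → ∀ z, 0 ≤ g i j z)
    (hg : ∀ i j, i ≠ j →
      μ.map (fun x : Fin n → ℝ => x j - x i)
        = (volume : Measure ℝ).withDensity (fun z => ENNReal.ofReal (g i j z)))
    (hmode : ∀ i j, i ≠ j → ∀ z, g i j z ≤ g i j (zbar i j))
    (i j : Fin n) (hij : i ≠ j) (a b : ℝ) (hab : a ≤ b) :
    μ {x | x j - x i ∈ Set.Ico a b}
      ≤ ENNReal.ofReal ((g i j (zbar i j) + g j i (zbar j i))/2 * (b - a)) := by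
  have hM1 : 0 ≤ g i j (zbar i j) := hg0 i j hij _
  have hM2 : 0 ≤ g j i (zbar j i) := hg0 j i hij.symm _
  have h1 : μ {x | x j - x i ∈ Set.Ico a b} ≤ ENNReal.ofReal (g i j (zbar i j) * (b - a)) := by
    have := pair_bound μ g zbar hg hmode i j hij (Set.Ico a b) measurableSet_Ico
    rwa [Real.volume_Ico, ← ENNReal.ofReal_mul hM1] at this
  have h2 : μ {x | x j - x i ∈ Set.Ico a b} ≤ ENNReal.ofReal (g j i (zbar j i) * (b - a)) := by
    have hset : {x : Fin n → ℝ | x j - x i ∈ Set.Ico a b}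
        = {x : Fin n → ℝ | x i - x j ∈ Set.Ioc (-b) (-a)} := by
      ext x
      simp only [Set.mem_setOf_eq, Set.mem_Ico, Set.mem_Ioc]
      constructor <;> intro ⟨h1', h2'⟩ <;> constructor <;> linarith
    have := pair_bound μ g zbar hg hmode j i hij.symm (Set.Ioc (-b) (-a)) measurableSet_Ioc
    rw [← hset] at this
    rwa [Real.volume_Ioc, show -a - -b = b - a by ring, ← ENNReal.ofReal_mul hM2] at this
  calc μ {x | x j - x i ∈ Set.Ico a b}
      ≤ min (ENNReal.ofReal (g i j (zbar i j) * (b - a)))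
          (ENNReal.ofReal (g j i (zbar j i) * (b - a))) := le_min h1 h2
    _ ≤ ENNReal.ofReal ((g i j (zbar i j) + g j i (zbar j i))/2 * (b - a)) := by
        rcases le_total (g i j (zbar i j)) (g j i (zbar j i)) with h | h
        · refine le_trans (min_le_left _ _) (ENNReal.ofReal_le_ofReal ?_)
          nlinarith
        · refine le_trans (min_le_right _ _) (ENNReal.ofReal_le_ofReal ?_)
          nlinarith

lemma S_pos (hn : 2 ≤ n)
    (hg0 : ∀ i j, i ≠ j → ∀ z, 0 ≤ g i j z)
    (hg : ∀ i j, i ≠ j →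
      μ.map (fun x : Fin n → ℝ => x j - x i)
        = (volume : Measure ℝ).withDensity (fun z => ENNReal.ofReal (g i j z)))
    (hmode : ∀ i j, i ≠ j → ∀ z, g i j z ≤ g i j (zbar i j)) :
    0 < ∑ i, ∑ j ∈ Finset.univ.erase i, g i j (zbar i j) := by
  have h0 : 0 < n := by omega
  have h1 : 1 < n := by omega
  set i0 : Fin n := ⟨0, h0⟩
  set j0 : Fin n := ⟨1, h1⟩
  have hij : i0 ≠ j0 := by simp [i0, j0, Fin.ext_iff]
  have hm : Measurable fun x : Fin n → ℝ => x j0 - x i0 :=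
    (measurable_pi_apply j0).sub (measurable_pi_apply i0)
  have hpos : 0 < g i0 j0 (zbar i0 j0) := by
    rcases (hg0 i0 j0 hij _).lt_or_eq with h | h
    · exact h
    · exfalso
      have hzero : (fun z => ENNReal.ofReal (g i0 j0 z)) = (0 : ℝ → ENNReal) := by
        funext z
        have hz : g i0 j0 z = 0 :=
          le_antisymm ((hmode i0 j0 hij z).trans h.ge) (hg0 i0 j0 hij z)
        simp [hz]
      have h2 : μ.map (fun x : Fin n → ℝ => x j0 - x i0) Set.univ = 1 := by
        haveI : IsProbabilityMeasure (μ.map (fun x : Fin n → ℝ => x j0 - x i0)) :=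
          Measure.isProbabilityMeasure_map hm.aemeasurable
        exact measure_univ
      rw [hg i0 j0 hij, hzero, withDensity_zero] at h2
      simp at h2
  have t1 : g i0 j0 (zbar i0 j0) ≤ ∑ j ∈ Finset.univ.erase i0, g i0 j (zbar i0 j) :=
    Finset.single_le_sum (fun j hj => hg0 i0 j (fun h => (Finset.mem_erase.mp hj).1 h.symm) _)
      (Finset.mem_erase.mpr ⟨hij.symm, Finset.mem_univ _⟩)
  have t2 : ∑ j ∈ Finset.univ.erase i0, g i0 j (zbar i0 j)
      ≤ ∑ i, ∑ j ∈ Finset.univ.erase i, g i j (zbar i j) :=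
    Finset.single_le_sum (f := fun i => ∑ j ∈ Finset.univ.erase i, g i j (zbar i j))
      (fun i _ => Finset.sum_nonneg fun j hj =>
        hg0 i j (fun h => (Finset.mem_erase.mp hj).1 h.symm) _)
      (Finset.mem_univ i0)
  linarith

end Pairs

section Sup
variable {n : ℕ} (μ : Measure (Fin n → ℝ)) [IsProbabilityMeasure μ]

lemma sup'_integrable (hint : ∀ i : Fin n, Integrable (fun x : Fin n → ℝ => x i) μ)
    (s : Finset (Fin n)) (hs : s.Nonempty) (v : Fin n → ℝ) :
    Integrable (fun x : Fin n → ℝ => s.sup' hs (fun i => v i + x i)) μ := by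
  have hm : Measurable fun x : Fin n → ℝ => s.sup' hs (fun i => v i + x i) := by
    have := Finset.measurable_sup' hs
      (f := fun (i : Fin n) (x : Fin n → ℝ) => v i + x i)
      (fun i _ => measurable_const.add (measurable_pi_apply i))
    have heq : (fun x : Fin n → ℝ => s.sup' hs fun i => v i + x i)
        = s.sup' hs (fun (i : Fin n) (x : Fin n → ℝ) => v i + x i) := by
      funext x; rw [Finset.sup'_apply]
    rw [heq]; exact this
  have hbound : Integrable (fun x : Fin n → ℝ => ∑ i ∈ s, |v i + x i|) μ :=
    integrable_finset_sum s (fun i _ => ((integrable_const (v i)).add (hint i)).abs)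
  refine hbound.mono' hm.aestronglyMeasurable ?_
  filter_upwards with x
  rw [Real.norm_eq_abs, abs_le]
  constructor
  · obtain ⟨i, hi⟩ := hs
    have h1 : |v i + x i| ≤ ∑ j ∈ s, |v j + x j| :=
      Finset.single_le_sum (f := fun j => |v j + x j|) (fun j _ => abs_nonneg _) hi
    have h2 : v i + x i ≤ s.sup' ⟨i, hi⟩ (fun j => v j + x j) := Finset.le_sup' (fun j => v j + x j) hi
    have h3 := neg_abs_le (v i + x i)
    linarith
  · apply Finset.sup'_le
    intro i hi
    exact (le_abs_self _).trans (Finset.single_le_sum (f := fun j => |v j + x j|) (fun j _ => abs_nonneg _) hi)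

lemma iSup_integrable (hn : 0 < n) (hint : ∀ i : Fin n, Integrable (fun x : Fin n → ℝ => x i) μ)
    (v : Fin n → ℝ) :
    Integrable (fun x : Fin n → ℝ => ⨆ i, (v i + x i)) μ := by
  haveI : Nonempty (Fin n) := ⟨⟨0, hn⟩⟩
  have := sup'_integrable μ hint Finset.univ Finset.univ_nonempty v
  convert this using 2 with x
  rw [Finset.sup'_univ_eq_ciSup]

lemma conj_bddAbove (hn : 0 < n)
    (hint : ∀ i : Fin n, Integrable (fun x : Fin n → ℝ => x i) μ)
    (E : (Fin n → ℝ) → ℝ)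
    (hE : ∀ u : Fin n → ℝ, E u = ∫ x, (⨆ i : Fin n, (u i + x i)) ∂μ)
    (p : Fin n → ℝ) (hp1 : ∑ i, p i = 1) (hp0 : ∀ i, 0 ≤ p i) :
    BddAbove {y : ℝ | ∃ u : Fin n → ℝ, y = ∑ i, p i * u i - E u} := by
  haveI : Nonempty (Fin n) := ⟨⟨0, hn⟩⟩
  refine ⟨-(∑ i, p i * ∫ x, x i ∂μ), ?_⟩
  rintro y ⟨u, rfl⟩
  rw [hE]
  have hterm : ∀ i : Fin n, Integrable (fun x : Fin n → ℝ => p i * (u i + x i)) μ :=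
    fun i => ((integrable_const (u i)).add (hint i)).const_mul (p i)
  have e1 : ∫ x, (∑ i, p i * (u i + x i)) ∂μ
      = ∑ i, p i * u i + ∑ i, p i * ∫ x, x i ∂μ := by
    rw [integral_finset_sum _ (fun i _ => hterm i)]
    have : ∀ i : Fin n, ∫ x, p i * (u i + x i) ∂μ = p i * u i + p i * ∫ x, x i ∂μ := by
      intro i
      rw [integral_const_mul, integral_add (integrable_const _) (hint i), integral_const]
      simp [measure_univ]
      ring
    rw [Finset.sum_congr rfl (fun i _ => this i), Finset.sum_add_distrib]
  have e2 : ∫ x, (∑ i, p i * (u i + x i)) ∂μ ≤ ∫ x, (⨆ i, (u i + x i)) ∂μ := by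
    refine integral_mono (integrable_finset_sum _ (fun i _ => hterm i))
      (iSup_integrable μ hn hint u) ?_
    intro x
    calc ∑ i, p i * (u i + x i) ≤ ∑ i, p i * (⨆ j, (u j + x j)) :=
          Finset.sum_le_sum fun i _ => mul_le_mul_of_nonneg_left
            (le_ciSup (f := fun j => u j + x j) (Set.Finite.bddAbove (Set.finite_range _)) i) (hp0 i)
      _ = (∑ i, p i) * (⨆ j, (u j + x j)) := by rw [← Finset.sum_mul]
      _ = ⨆ j, (u j + x j) := by rw [hp1, one_mul]
  linarith

end Sup
set_option maxHeartbeats 2000000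

/-- Strong convexity of `E*` under modal bounds on differences of utility
shocks: if for each pair `i ≠ j` the difference `ε⁽ʲ⁾ − ε⁽ⁱ⁾` has a density `g i j` with
mode `z̄ i j`, then `E*` is `β`-strongly convex on `Δ` w.r.t. the `ℓ1`-norm with
`β = 1 / (2 ∑_i ∑_{j≠i} g_{i,j}(z̄_{i,j}))`. -/
theorem conjugate_strongly_convex_of_modes
    (n : ℕ) (hn : 2 ≤ n)
    (μ : Measure (Fin n → ℝ)) [IsProbabilityMeasure μ]
    (hint : ∀ i : Fin n, Integrable (fun x : Fin n → ℝ => x i) μ)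
    (hac : μ ≪ (volume : Measure (Fin n → ℝ)))
    (hsupp : ∀ U : Set (Fin n → ℝ), IsOpen U → U.Nonempty → 0 < μ U)
    (E : (Fin n → ℝ) → ℝ)
    (hE : ∀ u : Fin n → ℝ, E u = ∫ x, (⨆ i : Fin n, (u i + x i)) ∂μ)
    (Estar : (Fin n → ℝ) → ℝ)
    (hEstar : ∀ p : Fin n → ℝ,
      Estar p = sSup {y : ℝ | ∃ u : Fin n → ℝ, y = ∑ i, p i * u i - E u})
    (g : Fin n → Fin n → ℝ → ℝ)
    (hg0 : ∀ i j, i ≠ j → ∀ z, 0 ≤ g i j z)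
    (hg : ∀ i j, i ≠ j →
      μ.map (fun x : Fin n → ℝ => x j - x i)
        = (volume : Measure ℝ).withDensity (fun z => ENNReal.ofReal (g i j z)))
    (zbar : Fin n → Fin n → ℝ)
    (hmode : ∀ i j, i ≠ j → ∀ z, g i j z ≤ g i j (zbar i j)) :
    ∀ p ∈ {p : Fin n → ℝ | ∑ i, p i = 1 ∧ ∀ i, 0 ≤ p i},
    ∀ q ∈ {p : Fin n → ℝ | ∑ i, p i = 1 ∧ ∀ i, 0 ≤ p i},
    ∀ α ∈ Set.Icc (0 : ℝ) 1,
      Estar (α • p + (1 - α) • q)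
        ≤ α * Estar p + (1 - α) * Estar q
          - (1 / (2 * ∑ i, ∑ j ∈ Finset.univ.erase i, g i j (zbar i j))) / 2
            * α * (1 - α) * (∑ i, |p i - q i|) ^ 2 := by
  intro p hp q hq α hα
  obtain ⟨hp1, hp0⟩ := hp
  obtain ⟨hq1, hq0⟩ := hq
  obtain ⟨hα0, hα1⟩ := hα
  have hn0 : 0 < n := by omega
  haveI : Nonempty (Fin n) := ⟨⟨0, hn0⟩⟩
  set S : ℝ := ∑ i, ∑ j ∈ Finset.univ.erase i, g i j (zbar i j) with hSdef
  have hS : 0 < S := S_pos μ g zbar hn hg0 hg hmode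
  by_cases hpq : p = q
  · subst hpq
    have hcomb : α • p + (1 - α) • p = p := by funext i; simp; ring
    have hzero : (∑ i, |p i - p i|) = 0 := by simp
    rw [hcomb, hzero]
    have hq' : α * Estar p + (1 - α) * Estar p - (1 / (2 * S)) / 2 * α * (1 - α) * (0:ℝ) ^ 2
        = Estar p := by ring
    linarith [hq'.ge]
  · -- main case
    set D : ℝ := ∑ i, |p i - q i| with hDdef
    have hD : 0 < D := by
      obtain ⟨i0, hi0⟩ := Function.ne_iff.mp hpq
      refine Finset.sum_pos' (fun i _ => abs_nonneg _) ⟨i0, Finset.mem_univ _, ?_⟩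
      exact abs_pos.mpr (sub_ne_zero.mpr hi0)
    set τ : ℝ := D / (2 * S) with hτdef
    have hτ : 0 ≤ τ := by positivity
    set P : Finset (Fin n) := Finset.univ.filter (fun i => q i ≤ p i) with hPdef
    set N : Finset (Fin n) := Finset.univ.filter (fun i => p i < q i) with hNdef
    have hdisj : Disjoint P N := by
      rw [Finset.disjoint_left]
      intro i hiP hiN
      exact absurd ((Finset.mem_filter.mp hiN).2) (not_lt.mpr (Finset.mem_filter.mp hiP).2)
    have huniv : P ∪ N = Finset.univ := by
      ext i
      simp only [hPdef, hNdef, Finset.mem_union, Finset.mem_filter, Finset.mem_univ, true_and]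
      exact iff_of_true (le_or_gt (q i) (p i)) trivial
    have hPne : P.Nonempty := by
      by_contra hcon
      rw [Finset.not_nonempty_iff_eq_empty] at hcon
      have hall : ∀ i, p i < q i := by
        intro i
        by_contra hle
        have hmem : i ∈ P := Finset.mem_filter.mpr ⟨Finset.mem_univ _, not_lt.mp hle⟩
        rw [hcon] at hmem
        exact absurd hmem (Finset.notMem_empty i)
      have : (∑ i, p i) < ∑ i, q i :=
        Finset.sum_lt_sum_of_nonempty Finset.univ_nonempty (fun i _ => hall i)
      rw [hp1, hq1] at this; exact lt_irrefl _ this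
    have hNne : N.Nonempty := by
      by_contra hcon
      rw [Finset.not_nonempty_iff_eq_empty] at hcon
      have hall : ∀ i, q i ≤ p i := by
        intro i
        by_contra hle
        have hmem : i ∈ N := Finset.mem_filter.mpr ⟨Finset.mem_univ _, not_le.mp hle⟩
        rw [hcon] at hmem
        exact absurd hmem (Finset.notMem_empty i)
      obtain ⟨i0, hi0⟩ := Function.ne_iff.mp hpq
      have hstrict : q i0 < p i0 := lt_of_le_of_ne (hall i0) (Ne.symm hi0)
      have : (∑ i, q i) < ∑ i, p i :=
        Finset.sum_lt_sum (fun i _ => hall i) ⟨i0, Finset.mem_univ _, hstrict⟩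
      rw [hp1, hq1] at this; exact lt_irrefl _ this
    set σ : Fin n → ℝ := fun i => if q i ≤ p i then 1 else -1 with hσdef
    have hσP : ∀ i ∈ P, σ i = 1 := by
      intro i hi
      simp only [hσdef, if_pos (Finset.mem_filter.mp hi).2]
    have hσN : ∀ i ∈ N, σ i = -1 := by
      intro i hi
      simp only [hσdef, if_neg (not_le.mpr (Finset.mem_filter.mp hi).2)]
    have hPQD : (∑ i, p i * σ i) - (∑ i, q i * σ i) = D := by
      rw [← Finset.sum_sub_distrib, hDdef]
      refine Finset.sum_congr rfl fun i _ => ?_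
      by_cases h : q i ≤ p i
      · rw [show σ i = 1 by simp only [hσdef, if_pos h], abs_of_nonneg (sub_nonneg.mpr h)]
        ring
      · rw [show σ i = -1 by simp only [hσdef, if_neg h],
          abs_of_neg (sub_neg.mpr (not_le.mp h))]
        ring
    rw [hEstar (α • p + (1 - α) • q)]
    refine csSup_le ⟨_, ⟨0, rfl⟩⟩ ?_
    intro y hy
    obtain ⟨u, rfl⟩ := hy
    -- the sup decomposition
    set Mp : (Fin n → ℝ) → ℝ := fun x => P.sup' hPne (fun i => u i + x i) with hMpdef
    set Mn : (Fin n → ℝ) → ℝ := fun x => N.sup' hNne (fun i => u i + x i) with hMndef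
    set C : (Fin n → ℝ) → ℝ := fun x => (Mp x + Mn x)/2 with hCdef
    set V : (Fin n → ℝ) → ℝ := fun x => (Mn x - Mp x)/2 with hVdef
    have hsupm : ∀ (s : Finset (Fin n)) (hs : s.Nonempty),
        Measurable (fun x : Fin n → ℝ => s.sup' hs (fun i => u i + x i)) := by
      intro s hs
      have h1 := Finset.measurable_sup' hs
        (f := fun (i : Fin n) (x : Fin n → ℝ) => u i + x i)
        (fun i _ => measurable_const.add (measurable_pi_apply i))
      have heq : (fun x : Fin n → ℝ => s.sup' hs fun i => u i + x i)
          = s.sup' hs (fun (i : Fin n) (x : Fin n → ℝ) => u i + x i) := by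
        funext x; rw [Finset.sup'_apply]
      rw [heq]; exact h1
    have hMpi : Integrable Mp μ := sup'_integrable μ hint P hPne u
    have hMni : Integrable Mn μ := sup'_integrable μ hint N hNne u
    have hVm : Measurable V := ((hsupm N hNne).sub (hsupm P hPne)).div_const 2
    have hVi : Integrable V μ := (hMni.sub hMpi).div_const 2
    have hCi : Integrable C μ := (hMpi.add hMni).div_const 2
    have hsup_eq : ∀ (t : ℝ) (x : Fin n → ℝ),
        (⨆ i, (u i + t * σ i + x i)) = C x + |t - V x| := by
      intro t x
      have h1 : (⨆ i, (u i + t * σ i + x i))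
          = (P ∪ N).sup' (huniv.symm ▸ Finset.univ_nonempty) (fun i => u i + t * σ i + x i) := by
        rw [← Finset.sup'_univ_eq_ciSup]
        exact Finset.sup'_congr _ huniv.symm (fun i _ => rfl)
      rw [h1, Finset.sup'_union hPne hNne (fun i => u i + t * σ i + x i)]
      have e1 : P.sup' hPne (fun i => u i + t * σ i + x i) = Mp x + t := by
        have hcong : ∀ i ∈ P, u i + t * σ i + x i = (u i + x i) + t := by
          intro i hi; rw [hσP i hi]; ring
        rw [Finset.sup'_congr hPne rfl hcong, ← Finset.sup'_add]
      have e2 : N.sup' hNne (fun i => u i + t * σ i + x i) = Mn x + (-t) := by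
        have hcong : ∀ i ∈ N, u i + t * σ i + x i = (u i + x i) + (-t) := by
          intro i hi; rw [hσN i hi]; ring
        rw [Finset.sup'_congr hNne rfl hcong, ← Finset.sup'_add]
      rw [e1, e2, max_helper]
    have hE_eq : ∀ t : ℝ, E (fun i => u i + t * σ i)
        = (∫ x, C x ∂μ) + ∫ x, |t - V x| ∂μ := by
      intro t
      rw [hE]
      show (∫ x, (⨆ i, (u i + t * σ i + x i)) ∂μ) = _
      rw [integral_congr_ae (Filter.Eventually.of_forall fun x => hsup_eq t x),
        integral_add hCi (abs_integrable μ V hVi t)]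
    have hdens : ∀ r r' : ℝ, r ≤ r' →
        μ {x | V x ∈ Set.Ico r r'} ≤ ENNReal.ofReal (S * (r' - r)) := by
      intro r r' hrr
      have hset : {x | V x ∈ Set.Ico r r'} ⊆
          ⋃ i ∈ P, ⋃ j ∈ N, {x : Fin n → ℝ |
            x j - x i ∈ Set.Ico (2*r - (u j - u i)) (2*r' - (u j - u i))} := by
        intro x hx
        obtain ⟨i, hiP, hieq⟩ := Finset.exists_mem_eq_sup' hPne (fun i => u i + x i)
        obtain ⟨j, hjN, hjeq⟩ := Finset.exists_mem_eq_sup' hNne (fun i => u i + x i)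
        simp only [Set.mem_iUnion]
        refine ⟨i, hiP, j, hjN, ?_⟩
        simp only [Set.mem_setOf_eq, Set.mem_Ico] at hx ⊢
        have hMp : Mp x = u i + x i := hieq
        have hMn : Mn x = u j + x j := hjeq
        have hVx : V x = ((u j + x j) - (u i + x i))/2 := by
          rw [hVdef]; dsimp only; rw [hMp, hMn]
        rw [hVx] at hx
        constructor <;> [linarith [hx.1]; linarith [hx.2]]
      calc μ {x | V x ∈ Set.Ico r r'}
          ≤ μ (⋃ i ∈ P, ⋃ j ∈ N, {x : Fin n → ℝ |
              x j - x i ∈ Set.Ico (2*r - (u j - u i)) (2*r' - (u j - u i))}) :=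
            measure_mono hset
        _ ≤ ∑ i ∈ P, μ (⋃ j ∈ N, {x : Fin n → ℝ |
              x j - x i ∈ Set.Ico (2*r - (u j - u i)) (2*r' - (u j - u i))}) :=
            measure_biUnion_finset_le P _
        _ ≤ ∑ i ∈ P, ∑ j ∈ N, μ {x : Fin n → ℝ |
              x j - x i ∈ Set.Ico (2*r - (u j - u i)) (2*r' - (u j - u i))} :=
            Finset.sum_le_sum fun i _ => measure_biUnion_finset_le N _
        _ ≤ ∑ i ∈ P, ∑ j ∈ N,
              ENNReal.ofReal ((g i j (zbar i j) + g j i (zbar j i))/2 * (2*(r'-r))) := by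
            refine Finset.sum_le_sum fun i hi => Finset.sum_le_sum fun j hj => ?_
            have hij : i ≠ j := fun h => Finset.disjoint_left.mp hdisj hi (h ▸ hj)
            have hb := pair_Ico_bound μ g zbar hg0 hg hmode i j hij
              (2*r - (u j - u i)) (2*r' - (u j - u i)) (by linarith)
            refine hb.trans (ENNReal.ofReal_le_ofReal (le_of_eq ?_))
            ring
        _ = ENNReal.ofReal (∑ i ∈ P, ∑ j ∈ N,
              (g i j (zbar i j) + g j i (zbar j i))/2 * (2*(r'-r))) := by
            rw [ENNReal.ofReal_sum_of_nonneg]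
            · refine Finset.sum_congr rfl fun i hi => ?_
              rw [ENNReal.ofReal_sum_of_nonneg]
              intro j hj
              have hij : i ≠ j := fun h => Finset.disjoint_left.mp hdisj hi (h ▸ hj)
              have h1 := hg0 i j hij (zbar i j)
              have h2 := hg0 j i hij.symm (zbar j i)
              exact mul_nonneg (by linarith) (by linarith)
            · intro i hi
              refine Finset.sum_nonneg fun j hj => ?_
              have hij : i ≠ j := fun h => Finset.disjoint_left.mp hdisj hi (h ▸ hj)
              have h1 := hg0 i j hij (zbar i j)
              have h2 := hg0 j i hij.symm (zbar j i)
              exact mul_nonneg (by linarith) (by linarith)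
        _ ≤ ENNReal.ofReal (S * (r' - r)) := by
            refine ENNReal.ofReal_le_ofReal ?_
            have hcomb := comb_bound (fun i j => g i j (zbar i j))
              (fun i j hij => hg0 i j hij _) P N hdisj
            have hre : ∑ i ∈ P, ∑ j ∈ N, (g i j (zbar i j) + g j i (zbar j i))/2 * (2*(r'-r))
                = (∑ i ∈ P, ∑ j ∈ N, (g i j (zbar i j) + g j i (zbar j i))) * (r'-r) := by
              rw [Finset.sum_mul]
              refine Finset.sum_congr rfl fun i _ => ?_
              rw [Finset.sum_mul]
              exact Finset.sum_congr rfl fun j _ => by ring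
            rw [hre, hSdef]
            exact mul_le_mul_of_nonneg_right hcomb (by linarith)
    have hgap := oneD_gap μ V hVm hVi S τ α hS.le hτ hα0 hα1 hdens
    have hEup : E (fun i => u i + ((1-α)*τ) * σ i)
        = (∫ x, C x ∂μ) + ∫ x, |(1-α)*τ - V x| ∂μ := hE_eq ((1-α)*τ)
    have hEuq : E (fun i => u i + (-(α*τ)) * σ i)
        = (∫ x, C x ∂μ) + ∫ x, |(-(α*τ)) - V x| ∂μ := hE_eq (-(α*τ))
    have hEu : E u = (∫ x, C x ∂μ) + ∫ x, |(0:ℝ) - V x| ∂μ := by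
      have h0 := hE_eq 0
      have hu0 : (fun i => u i + 0 * σ i) = u := by funext i; ring
      rwa [hu0] at h0
    have hSp : (∑ i, p i * (u i + ((1-α)*τ) * σ i))
        - E (fun i => u i + ((1-α)*τ) * σ i) ≤ Estar p := by
      rw [hEstar p]
      exact le_csSup (conj_bddAbove μ hn0 hint E hE p hp1 hp0)
        ⟨(fun i => u i + ((1-α)*τ) * σ i), rfl⟩
    have hSq : (∑ i, q i * (u i + (-(α*τ)) * σ i))
        - E (fun i => u i + (-(α*τ)) * σ i) ≤ Estar q := by
      rw [hEstar q]
      exact le_csSup (conj_bddAbove μ hn0 hint E hE q hq1 hq0)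
        ⟨(fun i => u i + (-(α*τ)) * σ i), rfl⟩
    have hsum_p : ∑ i, p i * (u i + ((1-α)*τ) * σ i)
        = (∑ i, p i * u i) + ((1-α)*τ) * (∑ i, p i * σ i) := by
      rw [Finset.mul_sum, ← Finset.sum_add_distrib]
      exact Finset.sum_congr rfl fun i _ => by ring
    have hsum_q : ∑ i, q i * (u i + (-(α*τ)) * σ i)
        = (∑ i, q i * u i) + (-(α*τ)) * (∑ i, q i * σ i) := by
      rw [Finset.mul_sum, ← Finset.sum_add_distrib]
      exact Finset.sum_congr rfl fun i _ => by ring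
    have hrsum : ∑ i, (α • p + (1 - α) • q) i * u i
        = α * (∑ i, p i * u i) + (1-α) * (∑ i, q i * u i) := by
      rw [Finset.mul_sum, Finset.mul_sum, ← Finset.sum_add_distrib]
      refine Finset.sum_congr rfl fun i _ => ?_
      simp only [Pi.add_apply, Pi.smul_apply, smul_eq_mul]
      ring
    rw [hsum_p] at hSp
    rw [hsum_q] at hSq
    rw [hEup] at hSp
    rw [hEuq] at hSq
    rw [hrsum, hEu]
    set A : ℝ := ∑ i, p i * u i
    set B : ℝ := ∑ i, q i * u i
    set PS : ℝ := ∑ i, p i * σ i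
    set QS : ℝ := ∑ i, q i * σ i
    set IC : ℝ := ∫ x, C x ∂μ
    set Φb : ℝ := ∫ x, |(1-α)*τ - V x| ∂μ
    set Φa : ℝ := ∫ x, |(-(α*τ)) - V x| ∂μ
    set Φ0 : ℝ := ∫ x, |(0:ℝ) - V x| ∂μ
    have hp' : α * ((A + (1-α)*τ * PS) - (IC + Φb)) ≤ α * Estar p :=
      mul_le_mul_of_nonneg_left hSp hα0
    have hq' : (1-α) * ((B + (-(α*τ)) * QS) - (IC + Φa)) ≤ (1-α) * Estar q :=
      mul_le_mul_of_nonneg_left hSq (by linarith)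
    have hpen : α * (1-α) * τ * D - S * (α*(1-α)*τ^2) = (1/(2*S))/2*α*(1-α)*D^2 := by
      rw [hτdef]
      field_simp
      ring
    have hexp : α * A + (1-α) * B - (IC + Φ0)
        = α * ((A + (1-α)*τ * PS) - (IC + Φb)) + (1-α) * ((B + (-(α*τ)) * QS) - (IC + Φa))
          + (α * Φb + (1-α) * Φa - Φ0) - α*(1-α)*τ*D := by
      rw [← hPQD]
      ring
    linarith [hp', hq', hgap, hpen, hexp.le, hexp.ge]
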